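/- For any nonempty string u over Σ and any integers 1 ≤ i < j, the power u^i precedes the power u^j in V-order: u ≺ u² ≺ ⋯ ≺ u^i ≺ ⋯ ≺ u^j. -/

import Mathlib

variable {α : Type*} [LinearOrder α]

/-- The star operation on strings: delete the letter `x_h`, where `h` is the
start of the longest non-decreasing suffix (so `h = 1` iff the whole string is
non-decreasing, and otherwise `x_{h-1} > x_h ≤ x_{h+1} ≤ ⋯ ≤ x_n`). -/
def vstar : List α → List α
  | [] => []
  | a :: t => if List.IsChain (· ≤ ·) (a :: t) then t else a :: vstar t

/-- V-order `≺` between distinct strings `x`, `y`: either `x` lies on the path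
`y, y*, y^{2*}, …, ε`, or (if neither lies on the path of the other) taking the
least `s, t` with `x^{(s+1)*} = y^{(t+1)*}` and the greatest position `j` at
which `s = x^{s*}` and `t = y^{t*}` differ, the letter of `x^{s*}` at `j` is
smaller than that of `y^{t*}`. -/
def VLess (x y : List α) : Prop :=
  (∃ k : ℕ, 0 < k ∧ vstar^[k] y = x) ∨
  ((¬ ∃ k : ℕ, vstar^[k] y = x) ∧ (¬ ∃ k : ℕ, vstar^[k] x = y) ∧
    ∃ s t : ℕ,
      vstar^[s + 1] x = vstar^[t + 1] y ∧
      (∀ s' t' : ℕ, vstar^[s' + 1] x = vstar^[t' + 1] y → s ≤ s' ∧ t ≤ t') ∧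
      ∃ j : ℕ, j < (vstar^[s] x).length ∧
        (∀ j' : ℕ, j < j' → (vstar^[s] x)[j']? = (vstar^[t] y)[j']?) ∧
        ∃ a b : α, (vstar^[s] x)[j]? = some a ∧ (vstar^[t] y)[j]? = some b ∧
          a < b)

set_option linter.unusedSectionVars false

theorem vstar_nil : vstar ([] : List α) = [] := rfl

theorem vstar_sublist (z : List α) : List.Sublist (vstar z) z := by
  induction z with
  | nil => simp [vstar]
  | cons a t ih =>
    rw [vstar]
    split
    · exact List.sublist_cons_self a t
    · exact ih.cons₂ a

theorem length_vstar (z : List α) (h : z ≠ []) : (vstar z).length + 1 = z.length := by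
  induction z with
  | nil => simp at h
  | cons a t ih =>
    rw [vstar]
    split
    · simp
    · rename_i hc
      have ht : t ≠ [] := by
        rintro rfl
        exact hc (List.isChain_singleton a)
      simp only [List.length_cons]
      rw [ih ht]

theorem length_vstar_iter (k : ℕ) (z : List α) : (vstar^[k] z).length = z.length - k := by
  induction k generalizing z with
  | zero => simp
  | succ k ih =>
    rw [Function.iterate_succ_apply, ih]
    rcases eq_or_ne z [] with rfl | h
    · simp [vstar_nil]
    · rw [← length_vstar z h]; omega

theorem chain'_le_replicate (n : ℕ) (a : α) : List.IsChain (· ≤ ·) (List.replicate n a) := by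
  induction n with
  | zero => simp
  | succ n ih =>
    rw [List.replicate_succ]
    cases n with
    | zero => simp
    | succ m => rw [List.replicate_succ, List.isChain_cons_cons, ← List.replicate_succ]
                exact ⟨le_refl a, ih⟩

theorem vstar_replicate (n : ℕ) (a : α) :
    vstar (List.replicate n a) = List.replicate (n - 1) a := by
  cases n with
  | zero => rfl
  | succ m =>
    rw [List.replicate_succ, vstar, if_pos]
    · simp
    · rw [← List.replicate_succ]; exact chain'_le_replicate _ a

theorem vstar_iter_replicate (k n : ℕ) (a : α) :
    vstar^[k] (List.replicate n a) = List.replicate (n - k) a := by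
  induction k generalizing n with
  | zero => simp
  | succ k ih =>
    rw [Function.iterate_succ_apply, vstar_replicate, ih]
    congr 1
    omega

theorem count_vstar (g : α) (z : List α) (hle : ∀ a ∈ z, a ≤ g) (hne : ¬ ∀ a ∈ z, a = g) :
    (vstar z).count g = z.count g := by
  induction z with
  | nil => simp at hne
  | cons a t ih =>
    rw [vstar]
    split
    · rename_i hc
      have ha : a ≠ g := by
        rintro rfl
        apply hne
        have hp := (List.isChain_iff_pairwise.mp hc)
        have := (List.pairwise_cons.mp hp).1
        intro b hb
        rcases List.mem_cons.mp hb with rfl | hb'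
        · rfl
        · exact le_antisymm (hle b (List.mem_cons_of_mem a hb')) (this b hb')
      simp [List.count_cons, ha]
    · rename_i hc
      have ht : t ≠ [] := by rintro rfl; exact hc (List.isChain_singleton a)
      have htne : ¬ ∀ b ∈ t, b = g := by
        intro hall
        apply hc
        obtain ⟨b, t', rfl⟩ := List.exists_cons_of_ne_nil ht
        rw [List.isChain_cons_cons]
        constructor
        · rw [hall b (by simp)]; exact hle a (by simp)
        · have : b :: t' = List.replicate (b :: t').length g :=
            List.eq_replicate_iff.mpr ⟨rfl, hall⟩
          rw [this]; exact chain'_le_replicate _ g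
      rw [List.count_cons, List.count_cons,
        ih (fun b hb => hle b (List.mem_cons_of_mem a hb)) htne]

theorem mem_vstar_iter (k : ℕ) (z : List α) : ∀ a ∈ vstar^[k] z, a ∈ z := by
  induction k generalizing z with
  | zero => simp
  | succ k ih =>
    rw [Function.iterate_succ_apply]
    exact fun a ha => (vstar_sublist z).subset (ih (vstar z) a ha)

theorem count_vstar_iter (g : α) (z : List α) (hle : ∀ a ∈ z, a ≤ g) (k : ℕ)
    (hk : k ≤ z.length - z.count g) : (vstar^[k] z).count g = z.count g := by
  induction k with
  | zero => simp
  | succ k ih =>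
    have hk' : k ≤ z.length - z.count g := by omega
    have hc := ih hk'
    have hlen : (vstar^[k] z).length = z.length - k := length_vstar_iter k z
    have hcle : z.count g ≤ z.length := z.count_le_length (a := g)
    have hne : ¬ ∀ a ∈ vstar^[k] z, a = g := by
      intro hall
      have : (vstar^[k] z).count g = (vstar^[k] z).length :=
        List.count_eq_length.mpr (fun b hb => (hall b hb).symm)
      omega
    rw [Function.iterate_succ_apply', count_vstar g _ (fun a ha => hle a (mem_vstar_iter k z a ha)) hne, hc]

theorem vstar_iter_eq_replicate (g : α) (z : List α) (hle : ∀ a ∈ z, a ≤ g) :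
    vstar^[z.length - z.count g] z = List.replicate (z.count g) g := by
  have h1 : (vstar^[z.length - z.count g] z).count g = z.count g :=
    count_vstar_iter g z hle _ le_rfl
  have h2 : (vstar^[z.length - z.count g] z).length = z.count g := by
    rw [length_vstar_iter]
    have := z.count_le_length (a := g)
    omega
  have h3 : ∀ b ∈ vstar^[z.length - z.count g] z, b = g := by
    have := List.count_eq_length.mp (by omega : (vstar^[z.length - z.count g] z).count g = (vstar^[z.length - z.count g] z).length)
    exact fun b hb => (this b hb).symm
  exact List.eq_replicate_iff.mpr ⟨h2, h3⟩

theorem flatten_replicate_length (m : ℕ) (u : List α) :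
    ((List.replicate m u).flatten).length = m * u.length := by
  induction m with
  | zero => simp
  | succ m ih => rw [List.replicate_succ, List.flatten_cons, List.length_append, ih]; ring

theorem flatten_replicate_count (g : α) (m : ℕ) (u : List α) :
    ((List.replicate m u).flatten).count g = m * u.count g := by
  induction m with
  | zero => simp
  | succ m ih => rw [List.replicate_succ, List.flatten_cons, List.count_append, ih]; ring

theorem mem_flatten_replicate {m : ℕ} {u : List α} {a : α}
    (h : a ∈ (List.replicate m u).flatten) : a ∈ u := by
  obtain ⟨l, hl, hal⟩ := List.mem_flatten.mp h
  rwa [(List.mem_replicate.mp hl).2] at hal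

theorem mem_flatten_replicate' {m : ℕ} {u : List α} {a : α} (hm : m ≠ 0)
    (h : a ∈ u) : a ∈ (List.replicate m u).flatten :=
  List.mem_flatten.mpr ⟨u, List.mem_replicate.mpr ⟨hm, rfl⟩, h⟩

theorem exists_last_ne (g : α) (z : List α) (h : ¬ ∀ a ∈ z, a = g) :
    ∃ p b, p < z.length ∧ z[p]? = some b ∧ b ≠ g ∧
      ∀ q, p < q → q < z.length → z[q]? = some g := by
  induction z using List.reverseRecOn with
  | nil => simp at h
  | append_singleton z' a ih =>
    rcases eq_or_ne a g with hag | hag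
    · have h' : ¬ ∀ b ∈ z', b = g := by
        intro hall
        exact h (fun b hb => by
          rcases List.mem_append.mp hb with hb' | hb'
          · exact hall b hb'
          · simp only [List.mem_singleton] at hb'; rw [hb', hag])
      obtain ⟨p, b, hp, hpb, hbg, hafter⟩ := ih h'
      refine ⟨p, b, by simp; omega, ?_, hbg, ?_⟩
      · rw [List.getElem?_append, if_pos hp]; exact hpb
      · intro q hq hq'
        simp only [List.length_append, List.length_singleton] at hq'
        rcases lt_or_ge q z'.length with hql | hqg
        · rw [List.getElem?_append, if_pos hql]; exact hafter q hq hql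
        · have hqe : q = z'.length := by omega
          rw [List.getElem?_append, if_neg (by omega), hqe]
          simp [hag]
    · refine ⟨z'.length, a, by simp, ?_, hag, ?_⟩
      · rw [List.getElem?_append, if_neg (by omega)]; simp
      · intro q hq hq'
        simp only [List.length_append, List.length_singleton] at hq'
        omega

theorem exists_list_max (u : List α) (hu : u ≠ []) : ∃ g ∈ u, ∀ a ∈ u, a ≤ g := by
  induction u with
  | nil => simp at hu
  | cons a t ih =>
    rcases eq_or_ne t [] with rfl | ht
    · exact ⟨a, by simp, by simp⟩
    · obtain ⟨g, hg, hmax⟩ := ih ht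
      rcases le_total a g with h | h
      · exact ⟨g, List.mem_cons_of_mem a hg, fun b hb => by
          rcases List.mem_cons.mp hb with rfl | hb'
          · exact h
          · exact hmax b hb'⟩
      · exact ⟨a, by simp, fun b hb => by
          rcases List.mem_cons.mp hb with rfl | hb'
          · exact le_rfl
          · exact le_trans (hmax b hb') h⟩

/-- Powers of a nonempty string are V-ordered by exponent: for `1 ≤ i < j`,
`u^i ≺ u^j`, so `u ≺ u² ≺ ⋯ ≺ u^i ≺ ⋯ ≺ u^j`. -/
theorem vless_pow_lt_pow {α : Type*} [LinearOrder α]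
    (u : List α) (hu : u ≠ []) (i j : ℕ) (hi : 1 ≤ i) (hij : i < j) :
    VLess (List.replicate i u).flatten (List.replicate j u).flatten := by
  have hn : 0 < u.length := List.length_pos_iff.mpr hu
  obtain ⟨g, hgu, hgmax⟩ := exists_list_max u hu
  set x := (List.replicate i u).flatten with hxdef
  set y := (List.replicate j u).flatten with hydef
  have hxlen : x.length = i * u.length := flatten_replicate_length i u
  have hylen : y.length = j * u.length := flatten_replicate_length j u
  have hxcnt : x.count g = i * u.count g := flatten_replicate_count g i u
  have hycnt : y.count g = j * u.count g := flatten_replicate_count g j u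
  have hcgu_pos : 0 < u.count g := List.count_pos_iff.mpr hgu
  have hcgu_le : u.count g ≤ u.length := u.count_le_length (a := g)
  by_cases hconst : ∀ a ∈ u, a = g
  · -- constant case: left disjunct
    left
    refine ⟨(j - i) * u.length, Nat.mul_pos (by omega) hn, ?_⟩
    have hyrep : y = List.replicate (j * u.length) g :=
      List.eq_replicate_iff.mpr ⟨hylen, fun b hb => hconst b (mem_flatten_replicate hb)⟩
    have hxrep : x = List.replicate (i * u.length) g :=
      List.eq_replicate_iff.mpr ⟨hxlen, fun b hb => hconst b (mem_flatten_replicate hb)⟩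
    rw [hyrep, vstar_iter_replicate, hxrep]
    congr 1
    rw [Nat.sub_mul]
    have : i * u.length ≤ j * u.length := Nat.mul_le_mul_right _ (le_of_lt hij)
    omega
  · -- non-constant case: right disjunct
    push_neg at hconst
    obtain ⟨b0, hb0u, hb0g⟩ := hconst
    have hcgu_lt : u.count g < u.length := by
      rcases lt_or_eq_of_le hcgu_le with h | h
      · exact h
      · exact absurd ((List.count_eq_length.mp h) b0 hb0u).symm hb0g
    -- abbreviations for arithmetic
    set N := u.length with hN
    set C := u.count g with hC
    set LX := i * N with hLX
    set LY := j * N with hLY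
    set A := i * C with hA
    set B := j * C with hB
    have hALX : A < LX := by
      have : i * C < i * N := (Nat.mul_lt_mul_left (by omega)).mpr hcgu_lt
      omega
    have hAB : A < B := (Nat.mul_lt_mul_right hcgu_pos).mpr hij
    have hBLY : B ≤ LY := Nat.mul_le_mul_left j hcgu_le
    have hLXLY : LX < LY := (Nat.mul_lt_mul_right hn).mpr hij
    have hA1 : 1 ≤ A := by
      have : 1 * 1 ≤ i * C := Nat.mul_le_mul hi hcgu_pos
      omega
    have hxle : ∀ a ∈ x, a ≤ g := fun a ha => hgmax a (mem_flatten_replicate ha)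
    have hyle : ∀ a ∈ y, a ≤ g := fun a ha => hgmax a (mem_flatten_replicate ha)
    have hKx : vstar^[LX - A] x = List.replicate A g := by
      have := vstar_iter_eq_replicate g x hxle
      rwa [hxlen, hxcnt] at this
    have hKy : vstar^[LY - B] y = List.replicate B g := by
      have := vstar_iter_eq_replicate g y hyle
      rwa [hylen, hycnt] at this
    have havey : ∀ m, LY - B ≤ m → vstar^[m] y = List.replicate (B - (m - (LY - B))) g := by
      intro m hm
      have hms : m = (m - (LY - B)) + (LY - B) := by omega
      rw [hms, Function.iterate_add_apply, hKy, vstar_iter_replicate]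
      congr 1
      omega
    have hcountx : ∀ k, k ≤ LX - A → (vstar^[k] x).count g = A := by
      intro k hk
      have := count_vstar_iter g x hxle k (by rw [hxlen, hxcnt]; omega)
      rwa [hxcnt] at this
    have hcounty : ∀ k, k ≤ LY - B → (vstar^[k] y).count g = B := by
      intro k hk
      have := count_vstar_iter g y hyle k (by rw [hylen, hycnt]; omega)
      rwa [hycnt] at this
    have hlenx : ∀ k, (vstar^[k] x).length = LX - k := by
      intro k; rw [length_vstar_iter, hxlen]
    have hleny : ∀ k, (vstar^[k] y).length = LY - k := by
      intro k; rw [length_vstar_iter, hylen]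
    right
    refine ⟨?_, ?_, LX - A - 1, LY - A - 1, ?_, ?_, ?_⟩
    · -- x not on path of y
      rintro ⟨k, hk⟩
      have hl := hleny k
      rw [hk, hxlen] at hl
      rcases le_or_gt (LY - B) k with hcase | hcase
      · have := havey k hcase
        rw [hk] at this
        have hb0x : b0 ∈ x := mem_flatten_replicate' (by omega) hb0u
        rw [this] at hb0x
        exact hb0g (List.mem_replicate.mp hb0x).2
      · have := hcounty k (by omega)
        rw [hk, hxcnt] at this
        omega
    · -- y not on path of x
      rintro ⟨k, hk⟩
      have hl := hlenx k
      rw [hk, hylen] at hl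
      omega
    · -- merge equation
      have hs1 : LX - A - 1 + 1 = LX - A := by omega
      have ht1 : LY - A - 1 + 1 = LY - A := by omega
      rw [hs1, ht1, hKx, havey (LY - A) (by omega)]
      congr 1
      omega
    · -- minimality
      intro s' t' h'
      have hls := hlenx (s' + 1)
      have hlt := hleny (t' + 1)
      rw [h'] at hls
      have hll : LX - (s' + 1) = LY - (t' + 1) := by omega
      rcases Nat.eq_zero_or_pos (LX - (s' + 1)) with hL0 | hLpos
      · omega
      · -- nonempty common value
        have hs1X : s' + 1 < LX := by omega
        have ht1Y : t' + 1 < LY := by omega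
        suffices hLA : LX - (s' + 1) ≤ A by omega
        by_contra hgt
        push_neg at hgt
        have hs1K : s' + 1 < LX - A := by omega
        have hcntV : (vstar^[s' + 1] x).count g = A := hcountx _ (by omega)
        rcases le_or_gt (LY - B) (t' + 1) with hcase | hcase
        · have hrep := havey (t' + 1) hcase
          rw [← h'] at hrep
          have : (vstar^[s' + 1] x).count g = (vstar^[s' + 1] x).length := by
            rw [hrep]; simp [List.count_replicate]
          rw [hlenx (s' + 1)] at this
          omega
        · have := hcounty (t' + 1) (by omega)
          rw [← h', hcntV] at this
          omega
    · -- the differing position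
      have hSlen : (vstar^[LX - A - 1] x).length = A + 1 := by
        rw [hlenx]; omega
      have hScnt : (vstar^[LX - A - 1] x).count g = A := hcountx _ (by omega)
      have hSne : ¬ ∀ a ∈ vstar^[LX - A - 1] x, a = g := by
        intro hall
        have := List.count_eq_length.mpr (fun b hb => (hall b hb).symm)
        omega
      obtain ⟨p, b, hp, hSp, hbg, hafter⟩ := exists_last_ne g _ hSne
      have hT : vstar^[LY - A - 1] y = List.replicate (A + 1) g := by
        rw [havey (LY - A - 1) (by omega)]
        congr 1
        omega
      refine ⟨p, hp, ?_, b, g, hSp, ?_, ?_⟩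
      · intro q hq
        rcases lt_or_ge q (vstar^[LX - A - 1] x).length with hql | hqg
        · rw [hafter q hq hql, hT, List.getElem?_replicate, if_pos (by omega)]
        · rw [List.getElem?_eq_none hqg, hT,
            List.getElem?_eq_none (by simp; omega)]
      · rw [hT, List.getElem?_replicate, if_pos (by omega)]
      · have hbmem : b ∈ vstar^[LX - A - 1] x := by
          obtain ⟨hlt, rfl⟩ := List.getElem?_eq_some_iff.mp hSp
          exact List.getElem_mem hlt
        exact lt_of_le_of_ne
          (hgmax b (mem_flatten_replicate (mem_vstar_iter _ x b hbmem))) hbg
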